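/- arXiv:1401.1381 — 4 statements merged into one kernel-verified Lean document; each statement's English description precedes it below -/
import Mathlib

section
/- The first four columns of the equivalent channel matrix of the 3D MIMO code satisfy the orthogonality relations ⟨h_1,h_2⟩ = ⟨h_1,h_4⟩ = ⟨h_2,h_3⟩ = ⟨h_3,h_4⟩ = 0 (for every channel matrix H ∈ ℂ^{2×4}). -/
noncomputable section

open scoped InnerProductSpace

namespace MIMO3D

/-- The Golden-code parameter θ = (1+√5)/2. -/
def goldenTheta : ℝ := (1 + Real.sqrt 5) / 2

/-- θ̄ = 1 − θ. -/
def goldenThetaBar : ℝ := 1 - goldenTheta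

/-- α = 1 + i(1−θ). -/
def alpha : ℂ := 1 + Complex.I * (1 - (goldenTheta : ℂ))

/-- ᾱ = 1 + i(1−θ̄). -/
def alphaBar : ℂ := 1 + Complex.I * (1 - (goldenThetaBar : ℂ))

/-- The 3D MIMO codeword matrix X(s), a 4×4 complex matrix built from the
eight information symbols s₁,…,s₈ (here 0-indexed as `s 0`,…,`s 7`). -/
def codeword (s : Fin 8 → ℂ) : Matrix (Fin 4) (Fin 4) ℂ :=
  ((Real.sqrt 5 : ℂ))⁻¹ •
  !![alpha * (s 0 + (goldenTheta : ℂ) * s 1),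
     alpha * (s 2 + (goldenTheta : ℂ) * s 3),
     -(starRingEnd ℂ alpha) * (starRingEnd ℂ (s 4) + (goldenTheta : ℂ) * starRingEnd ℂ (s 5)),
     -(starRingEnd ℂ alpha) * (starRingEnd ℂ (s 6) + (goldenTheta : ℂ) * starRingEnd ℂ (s 7));
     Complex.I * alphaBar * (s 2 + (goldenThetaBar : ℂ) * s 3),
     alphaBar * (s 0 + (goldenThetaBar : ℂ) * s 1),
     Complex.I * (starRingEnd ℂ alphaBar) * (starRingEnd ℂ (s 6) + (goldenThetaBar : ℂ) * starRingEnd ℂ (s 7)),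
     -(starRingEnd ℂ alphaBar) * (starRingEnd ℂ (s 4) + (goldenThetaBar : ℂ) * starRingEnd ℂ (s 5));
     alpha * (s 4 + (goldenTheta : ℂ) * s 5),
     alpha * (s 6 + (goldenTheta : ℂ) * s 7),
     (starRingEnd ℂ alpha) * (starRingEnd ℂ (s 0) + (goldenTheta : ℂ) * starRingEnd ℂ (s 1)),
     (starRingEnd ℂ alpha) * (starRingEnd ℂ (s 2) + (goldenTheta : ℂ) * starRingEnd ℂ (s 3));
     Complex.I * alphaBar * (s 6 + (goldenThetaBar : ℂ) * s 7),
     alphaBar * (s 4 + (goldenThetaBar : ℂ) * s 5),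
     -(Complex.I * (starRingEnd ℂ alphaBar) * (starRingEnd ℂ (s 2) + (goldenThetaBar : ℂ) * starRingEnd ℂ (s 3))),
     (starRingEnd ℂ alphaBar) * (starRingEnd ℂ (s 0) + (goldenThetaBar : ℂ) * starRingEnd ℂ (s 1))]

/-- ṽ(Y): stack the columns of the 2×4 complex matrix Y into ℂ^8
(giving (Y₁₁,Y₂₁,Y₁₂,Y₂₂,Y₁₃,Y₂₃,Y₁₄,Y₂₄)) and replace each complex entry z
by the pair (Re z, Im z), producing a vector of ℝ^16 (Euclidean space). -/
def tildeVec (Y : Matrix (Fin 2) (Fin 4) ℂ) : EuclideanSpace ℝ (Fin 16) :=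
  WithLp.toLp 2 fun m =>
    if m.val % 2 = 0 then
      (Y ⟨m.val % 4 / 2, by omega⟩ ⟨m.val / 4, by have := m.isLt; omega⟩).re
    else
      (Y ⟨m.val % 4 / 2, by omega⟩ ⟨m.val / 4, by have := m.isLt; omega⟩).im

/-- Recover the complex symbol vector s ∈ ℂ^8 from its real coordinate vector
s̃ = (Re s₁, Im s₁, …, Re s₈, Im s₈) ∈ ℝ^16. -/
def sOfReal (v : Fin 16 → ℝ) : Fin 8 → ℂ :=
  fun k => (v ⟨2 * k.val, by have := k.isLt; omega⟩ : ℂ)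
    + (v ⟨2 * k.val + 1, by have := k.isLt; omega⟩ : ℂ) * Complex.I

/-- The j-th column h_j (0-indexed: `hcol H j` is h_{j+1} of the paper) of the
equivalent channel matrix H_eq: the image of the j-th standard basis vector of
ℝ^16 under the ℝ-linear map s̃ ↦ ṽ(H · X(s)). -/
def hcol (H : Matrix (Fin 2) (Fin 4) ℂ) (j : Fin 16) : EuclideanSpace ℝ (Fin 16) :=
  tildeVec (H * codeword (sOfReal (Pi.single j 1)))

/-- The Gram–Schmidt residual r_j (0-indexed) of the columns of H_eq:
r_j = h_j − Σ_{k<j} ⟨q_k, h_j⟩ q_k. -/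
def rvec (H : Matrix (Fin 2) (Fin 4) ℂ) (j : Fin 16) : EuclideanSpace ℝ (Fin 16) :=
  have : WellFoundedLT (Fin 16) := inferInstance
  InnerProductSpace.gramSchmidt ℝ (hcol H) j

/-- The Gram–Schmidt orthonormalization q_j = r_j / ‖r_j‖ (0-indexed). -/
def qvec (H : Matrix (Fin 2) (Fin 4) ℂ) (j : Fin 16) : EuclideanSpace ℝ (Fin 16) :=
  have : WellFoundedLT (Fin 16) := inferInstance
  InnerProductSpace.gramSchmidtNormed ℝ (hcol H) j

end MIMO3D


namespace MIMO3D

lemma inner_tildeVec (Y Z : Matrix (Fin 2) (Fin 4) ℂ) :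
    ⟪tildeVec Y, tildeVec Z⟫_ℝ = ∑ c : Fin 4, ∑ r : Fin 2,
      ((Y r c).re * (Z r c).re + (Y r c).im * (Z r c).im) := by
  simp only [PiLp.inner_apply, RCLike.inner_apply, starRingEnd_apply, star_trivial, tildeVec,
    Fin.sum_univ_succ, Fin.sum_univ_zero, Fin.val_succ, Fin.val_zero]
  norm_num [show (⟨2, by omega⟩ : Fin 4) = 2 from rfl, show (⟨3, by omega⟩ : Fin 4) = 3 from rfl,
    show (Fin.succ 2 : Fin 4) = 3 from rfl, show (Fin.succ 1 : Fin 4) = 2 from rfl]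
  ring

lemma key2 (k u z w : ℂ) (h : z.re * w.re + z.im * w.im = 0) :
    (k * (u * z)).re * (k * (u * w)).re + (k * (u * z)).im * (k * (u * w)).im = 0 := by
  have hE : (k * (u * z)).re * (k * (u * w)).re + (k * (u * z)).im * (k * (u * w)).im
      = ((k * u).re ^ 2 + (k * u).im ^ 2) * (z.re * w.re + z.im * w.im) := by
    simp only [Complex.mul_re, Complex.mul_im]
    ring
  rw [hE, h, mul_zero]

lemma sOfReal_single0 : sOfReal (Pi.single (0 : Fin 16) 1) =
    fun k => if k = 0 then 1 else 0 := by
  funext k; fin_cases k <;>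
    simp (config := { decide := true }) [sOfReal, Pi.single, Function.update, Fin.ext_iff]

lemma sOfReal_single1 : sOfReal (Pi.single (1 : Fin 16) 1) =
    fun k => if k = 0 then Complex.I else 0 := by
  funext k; fin_cases k <;>
    simp (config := { decide := true }) [sOfReal, Pi.single, Function.update, Fin.ext_iff]

lemma sOfReal_single2 : sOfReal (Pi.single (2 : Fin 16) 1) =
    fun k => if k = 1 then 1 else 0 := by
  funext k; fin_cases k <;>
    simp (config := { decide := true }) [sOfReal, Pi.single, Function.update, Fin.ext_iff]

lemma sOfReal_single3 : sOfReal (Pi.single (3 : Fin 16) 1) =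
    fun k => if k = 1 then Complex.I else 0 := by
  funext k; fin_cases k <;>
    simp (config := { decide := true }) [sOfReal, Pi.single, Function.update, Fin.ext_iff]

def dvec0 : Fin 4 → ℂ := ![alpha, alphaBar, starRingEnd ℂ alpha, starRingEnd ℂ alphaBar]
def dvec1 : Fin 4 → ℂ := ![Complex.I * alpha, Complex.I * alphaBar,
  -(Complex.I * starRingEnd ℂ alpha), -(Complex.I * starRingEnd ℂ alphaBar)]
def dvec2 : Fin 4 → ℂ := ![(goldenTheta : ℂ) * alpha, (goldenThetaBar : ℂ) * alphaBar,
  (goldenTheta : ℂ) * starRingEnd ℂ alpha, (goldenThetaBar : ℂ) * starRingEnd ℂ alphaBar]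
def dvec3 : Fin 4 → ℂ := ![Complex.I * ((goldenTheta : ℂ) * alpha),
  Complex.I * ((goldenThetaBar : ℂ) * alphaBar),
  -(Complex.I * ((goldenTheta : ℂ) * starRingEnd ℂ alpha)),
  -(Complex.I * ((goldenThetaBar : ℂ) * starRingEnd ℂ alphaBar))]

lemma codeword0 : codeword (sOfReal (Pi.single (0 : Fin 16) 1)) =
    ((Real.sqrt 5 : ℂ))⁻¹ • Matrix.diagonal dvec0 := by
  rw [sOfReal_single0]
  ext i j
  fin_cases i <;> fin_cases j <;>
    simp [codeword, Matrix.diagonal, Matrix.vecHead, Matrix.vecTail, dvec0] <;> ring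

lemma codeword1 : codeword (sOfReal (Pi.single (1 : Fin 16) 1)) =
    ((Real.sqrt 5 : ℂ))⁻¹ • Matrix.diagonal dvec1 := by
  rw [sOfReal_single1]
  ext i j
  fin_cases i <;> fin_cases j <;>
    simp [codeword, Matrix.diagonal, Matrix.vecHead, Matrix.vecTail, dvec1] <;> ring

lemma codeword2 : codeword (sOfReal (Pi.single (2 : Fin 16) 1)) =
    ((Real.sqrt 5 : ℂ))⁻¹ • Matrix.diagonal dvec2 := by
  rw [sOfReal_single2]
  ext i j
  fin_cases i <;> fin_cases j <;>
    simp [codeword, Matrix.diagonal, Matrix.vecHead, Matrix.vecTail, dvec2] <;> ring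

lemma codeword3 : codeword (sOfReal (Pi.single (3 : Fin 16) 1)) =
    ((Real.sqrt 5 : ℂ))⁻¹ • Matrix.diagonal dvec3 := by
  rw [sOfReal_single3]
  ext i j
  fin_cases i <;> fin_cases j <;>
    simp [codeword, Matrix.diagonal, Matrix.vecHead, Matrix.vecTail, dvec3] <;> ring

lemma inner_zero_of (H : Matrix (Fin 2) (Fin 4) ℂ) (da db : Fin 4 → ℂ)
    (h : ∀ c : Fin 4, (da c).re * (db c).re + (da c).im * (db c).im = 0) :
    ⟪tildeVec (((Real.sqrt 5 : ℂ))⁻¹ • (H * Matrix.diagonal da)),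
      tildeVec (((Real.sqrt 5 : ℂ))⁻¹ • (H * Matrix.diagonal db))⟫_ℝ = 0 := by
  rw [inner_tildeVec]
  apply Finset.sum_eq_zero
  rintro c -
  apply Finset.sum_eq_zero
  rintro r -
  simp only [Matrix.smul_apply, smul_eq_mul, Matrix.mul_diagonal]
  exact key2 _ _ _ _ (h c)

end MIMO3D

open MIMO3D

/-- The first four columns of the equivalent channel matrix of the
3D MIMO code satisfy ⟨h₁,h₂⟩ = ⟨h₁,h₄⟩ = ⟨h₂,h₃⟩ = ⟨h₃,h₄⟩ = 0 (0-indexed here: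
h₁,…,h₄ of the paper are `hcol H 0`,…,`hcol H 3`), for every channel matrix H. -/
theorem stmt0 (H : Matrix (Fin 2) (Fin 4) ℂ) :
    ⟪hcol H 0, hcol H 1⟫_ℝ = 0 ∧ ⟪hcol H 0, hcol H 3⟫_ℝ = 0 ∧
    ⟪hcol H 1, hcol H 2⟫_ℝ = 0 ∧ ⟪hcol H 2, hcol H 3⟫_ℝ = 0 := by

  have e0 : hcol H 0 = tildeVec (((Real.sqrt 5 : ℂ))⁻¹ • (H * Matrix.diagonal dvec0)) := by
    rw [hcol, codeword0, Matrix.mul_smul]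
  have e1 : hcol H 1 = tildeVec (((Real.sqrt 5 : ℂ))⁻¹ • (H * Matrix.diagonal dvec1)) := by
    rw [hcol, codeword1, Matrix.mul_smul]
  have e2 : hcol H 2 = tildeVec (((Real.sqrt 5 : ℂ))⁻¹ • (H * Matrix.diagonal dvec2)) := by
    rw [hcol, codeword2, Matrix.mul_smul]
  have e3 : hcol H 3 = tildeVec (((Real.sqrt 5 : ℂ))⁻¹ • (H * Matrix.diagonal dvec3)) := by
    rw [hcol, codeword3, Matrix.mul_smul]
  rw [e0, e1, e2, e3]
  refine ⟨inner_zero_of H _ _ ?_, inner_zero_of H _ _ ?_, inner_zero_of H _ _ ?_,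
    inner_zero_of H _ _ ?_⟩ <;>
  · intro c
    fin_cases c <;>
      simp [dvec0, dvec1, dvec2, dvec3, Complex.mul_re, Complex.mul_im] <;> ring
end
end

section
/- (Theorem 1) In the QR decomposition H_eq = QR of the equivalent channel matrix of the 3D MIMO code, the upper-left 4×4 block R_11 of R is upper triangular with ⟨q_1,h_2⟩ = ⟨q_1,h_4⟩ = ⟨q_2,h_3⟩ = ⟨q_3,h_4⟩ = 0; that is, the (1,2), (1,4), (2,3) and (3,4) entries of R_11 vanish. -/
noncomputable section

open scoped InnerProductSpace

open MIMO3D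

namespace MIMO3D

set_option maxHeartbeats 4000000 in
private lemma inner_h01 (H : Matrix (Fin 2) (Fin 4) ℂ) :
    ⟪hcol H 0, hcol H 1⟫_ℝ = 0 := by
  simp only [hcol, sOfReal, tildeVec, codeword, PiLp.inner_apply, RCLike.inner_apply,
    conj_trivial, PiLp.toLp_apply, WithLp.ofLp_toLp, Fin.sum_univ_succ, Fin.sum_univ_zero, Pi.single_apply, Fin.ext_iff]
  norm_num (config := { decide := true }) [Matrix.mul_apply, Fin.sum_univ_succ,
    Matrix.smul_apply, Matrix.cons_val_zero,
    Matrix.cons_val_one, Matrix.head_cons, Matrix.cons_val', Matrix.head_fin_const,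
    Matrix.empty_val', Matrix.cons_val_fin_one]
  ring_nf

set_option maxHeartbeats 4000000 in
private lemma inner_h03 (H : Matrix (Fin 2) (Fin 4) ℂ) :
    ⟪hcol H 0, hcol H 3⟫_ℝ = 0 := by
  simp only [hcol, sOfReal, tildeVec, codeword, PiLp.inner_apply, RCLike.inner_apply,
    conj_trivial, PiLp.toLp_apply, WithLp.ofLp_toLp, Fin.sum_univ_succ, Fin.sum_univ_zero, Pi.single_apply, Fin.ext_iff]
  norm_num (config := { decide := true }) [Matrix.mul_apply, Fin.sum_univ_succ,
    Matrix.smul_apply, Matrix.cons_val_zero,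
    Matrix.cons_val_one, Matrix.head_cons, Matrix.cons_val', Matrix.head_fin_const,
    Matrix.empty_val', Matrix.cons_val_fin_one]
  ring_nf

set_option maxHeartbeats 4000000 in
private lemma inner_h12 (H : Matrix (Fin 2) (Fin 4) ℂ) :
    ⟪hcol H 1, hcol H 2⟫_ℝ = 0 := by
  simp only [hcol, sOfReal, tildeVec, codeword, PiLp.inner_apply, RCLike.inner_apply,
    conj_trivial, PiLp.toLp_apply, WithLp.ofLp_toLp, Fin.sum_univ_succ, Fin.sum_univ_zero, Pi.single_apply, Fin.ext_iff]
  norm_num (config := { decide := true }) [Matrix.mul_apply, Fin.sum_univ_succ,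
    Matrix.smul_apply, Matrix.cons_val_zero,
    Matrix.cons_val_one, Matrix.head_cons, Matrix.cons_val', Matrix.head_fin_const,
    Matrix.empty_val', Matrix.cons_val_fin_one]
  ring_nf

set_option maxHeartbeats 4000000 in
private lemma inner_h23 (H : Matrix (Fin 2) (Fin 4) ℂ) :
    ⟪hcol H 2, hcol H 3⟫_ℝ = 0 := by
  simp only [hcol, sOfReal, tildeVec, codeword, PiLp.inner_apply, RCLike.inner_apply,
    conj_trivial, PiLp.toLp_apply, WithLp.ofLp_toLp, Fin.sum_univ_succ, Fin.sum_univ_zero, Pi.single_apply, Fin.ext_iff]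
  norm_num (config := { decide := true }) [Matrix.mul_apply, Fin.sum_univ_succ,
    Matrix.smul_apply, Matrix.cons_val_zero,
    Matrix.cons_val_one, Matrix.head_cons, Matrix.cons_val', Matrix.head_fin_const,
    Matrix.empty_val', Matrix.cons_val_fin_one]
  ring_nf

private lemma r0_eq (H : Matrix (Fin 2) (Fin 4) ℂ) :
    rvec H 0 = hcol H 0 := by
  letI inst : WellFoundedLT (Fin 16) := inferInstance
  have key : InnerProductSpace.gramSchmidt ℝ (hcol H) 0 = hcol H 0 := by
    rw [InnerProductSpace.gramSchmidt_def ℝ (hcol H) 0]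
    have h : Finset.Iio (0 : Fin 16) = ∅ := by decide
    rw [h, Finset.sum_empty, sub_zero]
  exact key

private lemma r1_eq (H : Matrix (Fin 2) (Fin 4) ℂ) :
    rvec H 1 = hcol H 1 := by
  letI inst : WellFoundedLT (Fin 16) := inferInstance
  have h0 : InnerProductSpace.gramSchmidt ℝ (hcol H) 0 = hcol H 0 := r0_eq H
  have key : InnerProductSpace.gramSchmidt ℝ (hcol H) 1 = hcol H 1 := by
    rw [InnerProductSpace.gramSchmidt_def ℝ (hcol H) 1]
    have h : Finset.Iio (1 : Fin 16) = {0} := by decide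
    rw [h, Finset.sum_singleton, Submodule.starProjection_singleton, h0, inner_h01]
    simp
  exact key

private lemma inner_r2_h3 (H : Matrix (Fin 2) (Fin 4) ℂ) :
    ⟪rvec H 2, hcol H 3⟫_ℝ = 0 := by
  letI inst : WellFoundedLT (Fin 16) := inferInstance
  have h0 : InnerProductSpace.gramSchmidt ℝ (hcol H) 0 = hcol H 0 := r0_eq H
  have h1 : InnerProductSpace.gramSchmidt ℝ (hcol H) 1 = hcol H 1 := r1_eq H
  have key : ⟪InnerProductSpace.gramSchmidt ℝ (hcol H) 2, hcol H 3⟫_ℝ = 0 := by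
    rw [InnerProductSpace.gramSchmidt_def ℝ (hcol H) 2]
    have h : Finset.Iio (2 : Fin 16) = {0, 1} := by decide
    rw [h, Finset.sum_insert (by decide), Finset.sum_singleton]
    simp only [Submodule.starProjection_singleton, h0, h1]
    rw [inner_sub_left, inner_add_left, real_inner_smul_left, real_inner_smul_left,
      inner_h03, inner_h23, inner_h12]
    ring
  exact key

private lemma qvec_eq (H : Matrix (Fin 2) (Fin 4) ℂ) (j : Fin 16) :
    qvec H j = ‖rvec H j‖⁻¹ • rvec H j := rfl

private lemma rvec_tri (H : Matrix (Fin 2) (Fin 4) ℂ) {j k : Fin 16} (hkj : k < j) :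
    ⟪rvec H j, hcol H k⟫_ℝ = 0 := by
  letI inst : WellFoundedLT (Fin 16) := inferInstance
  have key : ⟪InnerProductSpace.gramSchmidt ℝ (hcol H) j, hcol H k⟫_ℝ = 0 :=
    InnerProductSpace.gramSchmidt_inv_triangular ℝ (hcol H) hkj
  exact key

end MIMO3D

open MIMO3D

/-- Theorem 1: In the QR decomposition H_eq = QR, the upper-left
4×4 block R₁₁ of R is upper triangular (first conjunct: ⟨q_j,h_k⟩ = 0 for k < j
within the block) with ⟨q₁,h₂⟩ = ⟨q₁,h₄⟩ = ⟨q₂,h₃⟩ = ⟨q₃,h₄⟩ = 0 (0-indexed here). -/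
theorem stmt2 (H : Matrix (Fin 2) (Fin 4) ℂ) (hLI : LinearIndependent ℝ (hcol H)) :
    (∀ j k : Fin 16, j.val < 4 → k < j → ⟪qvec H j, hcol H k⟫_ℝ = 0) ∧
    ⟪qvec H 0, hcol H 1⟫_ℝ = 0 ∧ ⟪qvec H 0, hcol H 3⟫_ℝ = 0 ∧
    ⟪qvec H 1, hcol H 2⟫_ℝ = 0 ∧ ⟪qvec H 2, hcol H 3⟫_ℝ = 0 := by
  refine ⟨fun j k _ hkj => ?_, ?_, ?_, ?_, ?_⟩
  · rw [qvec_eq, real_inner_smul_left, rvec_tri H hkj, mul_zero]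
  · rw [qvec_eq, real_inner_smul_left, r0_eq, inner_h01, mul_zero]
  · rw [qvec_eq, real_inner_smul_left, r0_eq, inner_h03, mul_zero]
  · rw [qvec_eq, real_inner_smul_left, r1_eq, inner_h12, mul_zero]
  · rw [qvec_eq, real_inner_smul_left, inner_r2_h3, mul_zero]
end
end

section
/- In the QR decomposition H_eq = QR of the equivalent channel matrix of the 3D MIMO code, the second diagonal 4×4 block R_22 of R has the same zero pattern as R_11: ⟨q_5,h_6⟩ = ⟨q_5,h_8⟩ = ⟨q_6,h_7⟩ = ⟨q_7,h_8⟩ = 0. -/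
noncomputable section

open scoped InnerProductSpace

namespace MIMO3D
open Submodule
open InnerProductSpace
local notation "E16" => EuclideanSpace ℝ (Fin 16)

def jperm (m : Fin 16) : Fin 16 :=
  ⟨if m.val % 2 = 0 then m.val + 1 else m.val - 1, by have := m.isLt; split <;> omega⟩

noncomputable def jsgn (m : Fin 16) : ℝ :=
  if m.val < 8 then (if m.val % 2 = 0 then -1 else 1) else (if m.val % 2 = 0 then 1 else -1)

noncomputable def Jv (v : E16) : E16 := WithLp.toLp 2 fun m => jsgn m * v (jperm m)

def mcoef (m : Fin 16) : ℝ := if (m.val / 4) % 2 = 0 then goldenThetaBar else goldenTheta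

noncomputable def Mv (v : E16) : E16 := WithLp.toLp 2 fun m => mcoef m * v m

lemma jperm_jperm (m : Fin 16) : jperm (jperm m) = m := by
  apply Fin.ext
  simp only [jperm]
  split_ifs <;> omega

lemma jperm_ne (m : Fin 16) : jperm m ≠ m := by
  intro h
  have := congrArg Fin.val h
  simp only [jperm] at this
  split_ifs at this <;> omega

lemma jsgn_jperm (m : Fin 16) : jsgn (jperm m) = -jsgn m := by
  have hlt := m.isLt
  simp only [jsgn, jperm]
  split_ifs <;> (try norm_num) <;> omega

lemma jsgn_mul_self (m : Fin 16) : jsgn m * jsgn m = 1 := by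
  simp only [jsgn]; split_ifs <;> norm_num

lemma mcoef_jperm (m : Fin 16) : mcoef (jperm m) = mcoef m := by
  simp only [mcoef, jperm]
  split_ifs <;> (try rfl) <;> (exfalso; omega)

lemma Jv_add (x y : E16) : Jv (x + y) = Jv x + Jv y := by
  ext m; simp only [Jv, PiLp.add_apply, PiLp.toLp_apply]; ring

lemma Jv_smul (c : ℝ) (x : E16) : Jv (c • x) = c • Jv x := by
  ext m; simp only [Jv, PiLp.smul_apply, smul_eq_mul, PiLp.toLp_apply]; ring

lemma Jv_neg (x : E16) : Jv (-x) = -(Jv x) := by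
  ext m; simp only [Jv, PiLp.neg_apply, PiLp.toLp_apply]; ring

lemma Jv_sub (x y : E16) : Jv (x - y) = Jv x - Jv y := by
  ext m; simp only [Jv, PiLp.sub_apply, PiLp.toLp_apply]; ring

lemma Mv_add (x y : E16) : Mv (x + y) = Mv x + Mv y := by
  ext m; simp only [Mv, PiLp.add_apply, PiLp.toLp_apply]; ring

lemma Mv_smul (c : ℝ) (x : E16) : Mv (c • x) = c • Mv x := by
  ext m; simp only [Mv, PiLp.smul_apply, smul_eq_mul, PiLp.toLp_apply]; ring

lemma Mv_sub (x y : E16) : Mv (x - y) = Mv x - Mv y := by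
  ext m; simp only [Mv, PiLp.sub_apply, PiLp.toLp_apply]; ring

lemma Jv_Jv (x : E16) : Jv (Jv x) = -x := by
  ext m
  simp only [Jv, PiLp.neg_apply, jsgn_jperm, PiLp.toLp_apply]
  rw [jperm_jperm]
  linear_combination (-(x m)) * jsgn_mul_self m

lemma JvMv (x : E16) : Jv (Mv x) = Mv (Jv x) := by
  ext m
  simp only [Jv, Mv, PiLp.toLp_apply]
  rw [mcoef_jperm]
  ring

lemma theta_sq : goldenTheta * goldenTheta = goldenTheta + 1 := by
  have := Real.sq_sqrt (show (0:ℝ) ≤ 5 by norm_num)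
  simp only [goldenTheta, pow_two] at *
  nlinarith

lemma thetaBar_sq : goldenThetaBar * goldenThetaBar = goldenThetaBar + 1 := by
  simp only [goldenThetaBar]; nlinarith [theta_sq]

lemma Mv_Mv (x : E16) : Mv (Mv x) = Mv x + x := by
  ext m
  simp only [Mv, PiLp.add_apply, mcoef, PiLp.toLp_apply]
  split_ifs with h
  · linear_combination x m * thetaBar_sq
  · linear_combination x m * theta_sq

lemma inner_Jv (x y : E16) : ⟪Jv x, y⟫_ℝ = -⟪x, Jv y⟫_ℝ := by
  have key : ⟪Jv x, y⟫_ℝ + ⟪x, Jv y⟫_ℝ = 0 := by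
    simp only [PiLp.inner_apply, RCLike.inner_apply, conj_trivial, ← Finset.sum_add_distrib]
    apply Finset.sum_involution (fun a _ => jperm a)
    · intro a _
      show y a * (Jv x) a + (Jv y) a * x a + (y (jperm a) * (Jv x) (jperm a)
        + (Jv y) (jperm a) * x (jperm a)) = 0
      simp only [Jv, jsgn_jperm, PiLp.toLp_apply]
      rw [jperm_jperm]
      ring
    · intro a _ _
      exact jperm_ne a
    · intro a _; exact Finset.mem_univ _
    · intro a _; exact jperm_jperm a
  linarith

lemma inner_Mv (x y : E16) : ⟪Mv x, y⟫_ℝ = ⟪x, Mv y⟫_ℝ := by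
  simp only [PiLp.inner_apply, RCLike.inner_apply, conj_trivial, Mv, PiLp.toLp_apply]
  exact Finset.sum_congr rfl fun m _ => by ring

lemma inner_Jv_self (x : E16) : ⟪x, Jv x⟫_ℝ = 0 := by
  have h := inner_Jv x x
  have h2 := real_inner_comm x (Jv x)
  linarith

lemma inner_JvMv_self (x : E16) : ⟪x, Jv (Mv x)⟫_ℝ = 0 := by
  have h1 := inner_Jv (Mv x) x
  have h2 := inner_Mv x (Jv x)
  have h4 := real_inner_comm x (Jv (Mv x))
  rw [show Mv (Jv x) = Jv (Mv x) from (JvMv x).symm] at h2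
  have h6 := real_inner_comm (Mv x) (Jv x)
  linarith

lemma sqrt5_pos : (0:ℝ) < Real.sqrt 5 := Real.sqrt_pos.2 (by norm_num)
lemma sqrt5_inv : (Real.sqrt 5)⁻¹ = Real.sqrt 5 / 5 := by
  rw [inv_eq_one_div, div_eq_div_iff sqrt5_pos.ne' (by norm_num)]
  nlinarith [Real.mul_self_sqrt (show (0:ℝ) ≤ 5 by norm_num)]

lemma fv0 : ((0 : Fin 16) : ℕ) = 0 := rfl
lemma fv1 : ((1 : Fin 16) : ℕ) = 1 := rfl
lemma fv2 : ((2 : Fin 16) : ℕ) = 2 := rfl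
lemma fv3 : ((3 : Fin 16) : ℕ) = 3 := rfl
lemma fv4 : ((4 : Fin 16) : ℕ) = 4 := rfl
lemma fv5 : ((5 : Fin 16) : ℕ) = 5 := rfl
lemma fv6 : ((6 : Fin 16) : ℕ) = 6 := rfl
lemma fv7 : ((7 : Fin 16) : ℕ) = 7 := rfl
lemma fv8 : ((8 : Fin 16) : ℕ) = 8 := rfl
lemma fv9 : ((9 : Fin 16) : ℕ) = 9 := rfl
lemma fv10 : ((10 : Fin 16) : ℕ) = 10 := rfl
lemma fv11 : ((11 : Fin 16) : ℕ) = 11 := rfl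
lemma fv12 : ((12 : Fin 16) : ℕ) = 12 := rfl
lemma fv13 : ((13 : Fin 16) : ℕ) = 13 := rfl
lemma fv14 : ((14 : Fin 16) : ℕ) = 14 := rfl
lemma fv15 : ((15 : Fin 16) : ℕ) = 15 := rfl

variable (H : Matrix (Fin 2) (Fin 4) ℂ)

set_option maxHeartbeats 1000000 in
lemma h1J : hcol H 1 = Jv (hcol H 0) := by
  ext m
  fin_cases m <;>
  · simp (config := { decide := true }) [hcol, tildeVec, codeword, sOfReal, Matrix.mul_apply,
      Fin.sum_univ_four, Pi.single_apply, Fin.ext_iff, Matrix.smul_apply, Complex.ofReal_inv,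
      Complex.mul_im, Complex.mul_re, Matrix.vecHead, Matrix.vecTail, sqrt5_inv,
      Jv, jsgn, jperm, PiLp.toLp_apply, fv0, fv1, fv2, fv3, fv4, fv5, fv6, fv7, fv8, fv9, fv10, fv11, fv12, fv13, fv14, fv15]
    try ring

set_option maxHeartbeats 1000000 in
lemma h3J : hcol H 3 = Jv (hcol H 2) := by
  ext m
  fin_cases m <;>
  · simp (config := { decide := true }) [hcol, tildeVec, codeword, sOfReal, Matrix.mul_apply,
      Fin.sum_univ_four, Pi.single_apply, Fin.ext_iff, Matrix.smul_apply, Complex.ofReal_inv,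
      Complex.mul_im, Complex.mul_re, Matrix.vecHead, Matrix.vecTail, sqrt5_inv,
      Jv, jsgn, jperm, PiLp.toLp_apply, fv0, fv1, fv2, fv3, fv4, fv5, fv6, fv7, fv8, fv9, fv10, fv11, fv12, fv13, fv14, fv15]
    try ring

set_option maxHeartbeats 1000000 in
lemma h5J : hcol H 5 = Jv (hcol H 4) := by
  ext m
  fin_cases m <;>
  · simp (config := { decide := true }) [hcol, tildeVec, codeword, sOfReal, Matrix.mul_apply,
      Fin.sum_univ_four, Pi.single_apply, Fin.ext_iff, Matrix.smul_apply, Complex.ofReal_inv,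
      Complex.mul_im, Complex.mul_re, Matrix.vecHead, Matrix.vecTail, sqrt5_inv,
      Jv, jsgn, jperm, PiLp.toLp_apply, fv0, fv1, fv2, fv3, fv4, fv5, fv6, fv7, fv8, fv9, fv10, fv11, fv12, fv13, fv14, fv15]
    try ring

set_option maxHeartbeats 1000000 in
lemma h7J : hcol H 7 = Jv (hcol H 6) := by
  ext m
  fin_cases m <;>
  · simp (config := { decide := true }) [hcol, tildeVec, codeword, sOfReal, Matrix.mul_apply,
      Fin.sum_univ_four, Pi.single_apply, Fin.ext_iff, Matrix.smul_apply, Complex.ofReal_inv,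
      Complex.mul_im, Complex.mul_re, Matrix.vecHead, Matrix.vecTail, sqrt5_inv,
      Jv, jsgn, jperm, PiLp.toLp_apply, fv0, fv1, fv2, fv3, fv4, fv5, fv6, fv7, fv8, fv9, fv10, fv11, fv12, fv13, fv14, fv15]
    try ring

set_option maxHeartbeats 1000000 in
lemma h2M : hcol H 2 = hcol H 0 - Mv (hcol H 0) := by
  ext m
  fin_cases m <;>
  · simp (config := { decide := true }) [hcol, tildeVec, codeword, sOfReal, Matrix.mul_apply,
      Fin.sum_univ_four, Pi.single_apply, Fin.ext_iff, Matrix.smul_apply, Complex.ofReal_inv,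
      Complex.mul_im, Complex.mul_re, Matrix.vecHead, Matrix.vecTail, sqrt5_inv,
      Mv, mcoef, PiLp.sub_apply, PiLp.toLp_apply, goldenThetaBar, fv0, fv1, fv2, fv3, fv4, fv5, fv6, fv7, fv8, fv9, fv10, fv11, fv12, fv13, fv14, fv15]
    try ring

set_option maxHeartbeats 1000000 in
lemma h6M : hcol H 6 = Mv (hcol H 4) := by
  ext m
  fin_cases m <;>
  · simp (config := { decide := true }) [hcol, tildeVec, codeword, sOfReal, Matrix.mul_apply,
      Fin.sum_univ_four, Pi.single_apply, Fin.ext_iff, Matrix.smul_apply, Complex.ofReal_inv,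
      Complex.mul_im, Complex.mul_re, Matrix.vecHead, Matrix.vecTail, sqrt5_inv,
      Mv, mcoef, PiLp.toLp_apply, goldenThetaBar, fv0, fv1, fv2, fv3, fv4, fv5, fv6, fv7, fv8, fv9, fv10, fv11, fv12, fv13, fv14, fv15]
    try ring

instance : WellFoundedLT (Fin 16) := inferInstance

lemma inner_span_zero {x : E16} {s : Set E16} (hx : ∀ v ∈ s, ⟪x, v⟫_ℝ = 0) :
    ∀ v ∈ span ℝ s, ⟪x, v⟫_ℝ = 0 := by
  intro v hv
  induction hv using span_induction with
  | mem y hy => exact hx y hy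
  | zero => exact inner_zero_right x
  | add y z _ _ hy hz => rw [inner_add_right, hy, hz, add_zero]
  | smul a y _ hy => rw [real_inner_smul_right, hy, mul_zero]

variable (H : Matrix (Fin 2) (Fin 4) ℂ)

lemma r_orth_span {m j : Fin 16} (hmj : m < j) :
    ∀ v ∈ span ℝ (hcol H '' Set.Iic m), ⟪gramSchmidt ℝ (hcol H) j, v⟫_ℝ = 0 := by
  apply inner_span_zero
  rintro v ⟨i, hi, rfl⟩
  exact gramSchmidt_inv_triangular ℝ (hcol H) (lt_of_le_of_lt hi hmj)

lemma sub_r_mem_span {n m : Fin 16} (hnm : ∀ i : Fin 16, i < n → i ≤ m) :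
    hcol H n - gramSchmidt ℝ (hcol H) n ∈ span ℝ (hcol H '' Set.Iic m) := by
  have hdef := gramSchmidt_def' ℝ (hcol H) n
  have heq : hcol H n - gramSchmidt ℝ (hcol H) n
      = ∑ i ∈ Finset.Iio n,
        (ℝ ∙ gramSchmidt ℝ (hcol H) i).starProjection (hcol H n) := by
    nth_rewrite 1 [hdef]; abel
  rw [heq]
  apply Submodule.sum_mem
  intro i hi
  have hile : i ≤ m := hnm i (Finset.mem_Iio.1 hi)
  have hmem : (ℝ ∙ gramSchmidt ℝ (hcol H) i).starProjection (hcol H n)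
      ∈ (ℝ ∙ gramSchmidt ℝ (hcol H) i) := Submodule.starProjection_apply_mem _ _
  have hsub : (ℝ ∙ gramSchmidt ℝ (hcol H) i) ≤ span ℝ (hcol H '' Set.Iic m) := by
    rw [Submodule.span_singleton_le_iff_mem]
    exact gramSchmidt_mem_span ℝ (hcol H) hile
  exact hsub hmem

lemma mem_gen {i m : Fin 16} (him : i ≤ m) : hcol H i ∈ span ℝ (hcol H '' Set.Iic m) :=
  subset_span ⟨i, him, rfl⟩

lemma Jv_zero : Jv 0 = (0 : E16) := by
  ext mm; simp [Jv]

lemma Mv_zero : Mv 0 = (0 : E16) := by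
  ext mm; simp [Mv]

lemma Jspan3 : ∀ v ∈ span ℝ (hcol H '' Set.Iic (3:Fin 16)),
    Jv v ∈ span ℝ (hcol H '' Set.Iic (3:Fin 16)) := by
  intro v hv
  induction hv using span_induction with
  | mem y hy =>
    obtain ⟨i, hi, rfl⟩ := hy
    fin_cases i
    · show Jv (hcol H 0) ∈ _
      rw [← h1J H]; exact mem_gen H (by decide)
    · show Jv (hcol H 1) ∈ _
      rw [show hcol H 1 = Jv (hcol H 0) from h1J H, Jv_Jv]
      exact neg_mem (mem_gen H (by decide))
    · show Jv (hcol H 2) ∈ _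
      rw [← h3J H]; exact mem_gen H (by decide)
    · show Jv (hcol H 3) ∈ _
      rw [show hcol H 3 = Jv (hcol H 2) from h3J H, Jv_Jv]
      exact neg_mem (mem_gen H (by decide))
    all_goals (exfalso; revert hi; decide)
  | zero => rw [Jv_zero]; exact zero_mem _
  | add y z _ _ hy hz => rw [Jv_add]; exact add_mem hy hz
  | smul a y _ hy => rw [Jv_smul]; exact smul_mem _ a hy

lemma MvH0 : Mv (hcol H 0) = hcol H 0 - hcol H 2 := by
  rw [h2M H]; abel

lemma MvH1 : Mv (hcol H 1) = hcol H 1 - hcol H 3 := by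
  rw [h1J H, h3J H, ← JvMv, MvH0 H, Jv_sub]

lemma MvH2 : Mv (hcol H 2) = -hcol H 0 := by
  rw [h2M H, Mv_sub, Mv_Mv, MvH0 H]; abel

lemma MvH3 : Mv (hcol H 3) = -hcol H 1 := by
  rw [h3J H, ← JvMv, MvH2 H, Jv_neg, ← h1J H]

lemma Mspan3 : ∀ v ∈ span ℝ (hcol H '' Set.Iic (3:Fin 16)),
    Mv v ∈ span ℝ (hcol H '' Set.Iic (3:Fin 16)) := by
  intro v hv
  induction hv using span_induction with
  | mem y hy =>
    obtain ⟨i, hi, rfl⟩ := hy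
    fin_cases i
    · show Mv (hcol H 0) ∈ _
      rw [MvH0 H]; exact sub_mem (mem_gen H (by decide)) (mem_gen H (by decide))
    · show Mv (hcol H 1) ∈ _
      rw [MvH1 H]; exact sub_mem (mem_gen H (by decide)) (mem_gen H (by decide))
    · show Mv (hcol H 2) ∈ _
      rw [MvH2 H]; exact neg_mem (mem_gen H (by decide))
    · show Mv (hcol H 3) ∈ _
      rw [MvH3 H]; exact neg_mem (mem_gen H (by decide))
    all_goals (exfalso; revert hi; decide)
  | zero => rw [Mv_zero]; exact zero_mem _
  | add y z _ _ hy hz => rw [Mv_add]; exact add_mem hy hz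
  | smul a y _ hy => rw [Mv_smul]; exact smul_mem _ a hy

lemma Jspan5 : ∀ v ∈ span ℝ (hcol H '' Set.Iic (5:Fin 16)),
    Jv v ∈ span ℝ (hcol H '' Set.Iic (5:Fin 16)) := by
  intro v hv
  induction hv using span_induction with
  | mem y hy =>
    obtain ⟨i, hi, rfl⟩ := hy
    fin_cases i
    · show Jv (hcol H 0) ∈ _
      rw [← h1J H]; exact mem_gen H (by decide)
    · show Jv (hcol H 1) ∈ _
      rw [show hcol H 1 = Jv (hcol H 0) from h1J H, Jv_Jv]
      exact neg_mem (mem_gen H (by decide))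
    · show Jv (hcol H 2) ∈ _
      rw [← h3J H]; exact mem_gen H (by decide)
    · show Jv (hcol H 3) ∈ _
      rw [show hcol H 3 = Jv (hcol H 2) from h3J H, Jv_Jv]
      exact neg_mem (mem_gen H (by decide))
    · show Jv (hcol H 4) ∈ _
      rw [← h5J H]; exact mem_gen H (by decide)
    · show Jv (hcol H 5) ∈ _
      rw [show hcol H 5 = Jv (hcol H 4) from h5J H, Jv_Jv]
      exact neg_mem (mem_gen H (by decide))
    all_goals (exfalso; revert hi; decide)
  | zero => rw [Jv_zero]; exact zero_mem _
  | add y z _ _ hy hz => rw [Jv_add]; exact add_mem hy hz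
  | smul a y _ hy => rw [Jv_smul]; exact smul_mem _ a hy

-- decomposition of h_4
lemma h4_decomp : hcol H 4 = gramSchmidt ℝ (hcol H) 4
    + (hcol H 4 - gramSchmidt ℝ (hcol H) 4) := by abel

lemma w4_mem : hcol H 4 - gramSchmidt ℝ (hcol H) 4 ∈ span ℝ (hcol H '' Set.Iic (3:Fin 16)) :=
  sub_r_mem_span H (by decide)

-- Claim A : ⟪r4, h5⟫ = 0
lemma claimA : ⟪gramSchmidt ℝ (hcol H) 4, hcol H 5⟫_ℝ = 0 := by
  rw [h5J H]
  nth_rewrite 1 [h4_decomp H]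
  rw [Jv_add, inner_add_right, inner_Jv_self]
  rw [r_orth_span H (show (3:Fin 16) < 4 by decide) _ (Jspan3 H _ (w4_mem H))]
  norm_num

-- Claim B : ⟪r4, h7⟫ = 0
lemma claimB : ⟪gramSchmidt ℝ (hcol H) 4, hcol H 7⟫_ℝ = 0 := by
  rw [h7J H, h6M H]
  nth_rewrite 1 [h4_decomp H]
  rw [Mv_add, Jv_add, inner_add_right, inner_JvMv_self]
  rw [r_orth_span H (show (3:Fin 16) < 4 by decide) _
    (Jspan3 H _ (Mspan3 H _ (w4_mem H)))]
  norm_num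

-- r5 = J r4
lemma r5_eq : gramSchmidt ℝ (hcol H) 5 = Jv (gramSchmidt ℝ (hcol H) 4) := by
  set r4 := gramSchmidt ℝ (hcol H) 4 with hr4
  set r5 := gramSchmidt ℝ (hcol H) 5 with hr5
  set d := r5 - Jv r4 with hd
  have hJr4 : Jv r4 = hcol H 5 - Jv (hcol H 4 - r4) := by
    rw [Jv_sub, h5J H]; abel
  have dmem : d ∈ span ℝ (hcol H '' Set.Iic (4:Fin 16)) := by
    have h1 : d = Jv (hcol H 4 - r4) - (hcol H 5 - r5) := by
      rw [hd, hJr4]; abel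
    rw [h1]
    apply sub_mem
    · have h34 : span ℝ (hcol H '' Set.Iic (3:Fin 16)) ≤ span ℝ (hcol H '' Set.Iic (4:Fin 16)) :=
        span_mono (Set.image_mono (Set.Iic_subset_Iic.2 (by decide)))
      exact h34 (Jspan3 H _ (w4_mem H))
    · exact sub_r_mem_span H (by decide)
  have dorth : ∀ v ∈ span ℝ (hcol H '' Set.Iic (4:Fin 16)), ⟪d, v⟫_ℝ = 0 := by
    apply inner_span_zero
    rintro v ⟨i, hi, rfl⟩
    rw [hd, inner_sub_left]
    have h5i : ⟪r5, hcol H i⟫_ℝ = 0 :=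
      gramSchmidt_inv_triangular ℝ (hcol H) (lt_of_le_of_lt hi (by decide))
    have hJi : ⟪Jv r4, hcol H i⟫_ℝ = 0 := by
      rw [inner_Jv]
      by_cases hi3 : i ≤ (3:Fin 16)
      · rw [r_orth_span H (show (3:Fin 16) < 4 by decide) _ (Jspan3 H _ (mem_gen H hi3))]
        norm_num
      · have hi4 : i = 4 := le_antisymm hi (not_le.1 hi3)
        subst hi4
        nth_rewrite 1 [h4_decomp H]
        rw [Jv_add, inner_add_right, inner_Jv_self]
        rw [r_orth_span H (show (3:Fin 16) < 4 by decide) _ (Jspan3 H _ (w4_mem H))]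
        norm_num
    rw [h5i, hJi, sub_zero]
  have : ⟪d, d⟫_ℝ = 0 := dorth d dmem
  have hd0 : d = 0 := by
    rwa [inner_self_eq_zero] at this
  rw [← sub_eq_zero]
  exact hd0

-- Claim C : ⟪r5, h6⟫ = 0
lemma claimC : ⟪gramSchmidt ℝ (hcol H) 5, hcol H 6⟫_ℝ = 0 := by
  rw [h6M H, r5_eq H]
  nth_rewrite 1 [h4_decomp H]
  rw [Mv_add, inner_add_right]
  have h1 : ⟪Jv (gramSchmidt ℝ (hcol H) 4), Mv (gramSchmidt ℝ (hcol H) 4)⟫_ℝ = 0 := by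
    rw [inner_Jv, inner_JvMv_self, neg_zero]
  have h2 : ⟪Jv (gramSchmidt ℝ (hcol H) 4), Mv (hcol H 4 - gramSchmidt ℝ (hcol H) 4)⟫_ℝ = 0 := by
    rw [inner_Jv]
    rw [r_orth_span H (show (3:Fin 16) < 4 by decide) _
      (Jspan3 H _ (Mspan3 H _ (w4_mem H)))]
    norm_num
  rw [h1, h2, add_zero]

-- Claim D : ⟪r6, h7⟫ = 0
lemma claimD : ⟪gramSchmidt ℝ (hcol H) 6, hcol H 7⟫_ℝ = 0 := by
  rw [h7J H]
  have h6dec : hcol H 6 = gramSchmidt ℝ (hcol H) 6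
      + (hcol H 6 - gramSchmidt ℝ (hcol H) 6) := by abel
  nth_rewrite 1 [h6dec]
  rw [Jv_add, inner_add_right, inner_Jv_self]
  have w6 : hcol H 6 - gramSchmidt ℝ (hcol H) 6 ∈ span ℝ (hcol H '' Set.Iic (5:Fin 16)) :=
    sub_r_mem_span H (by decide)
  rw [r_orth_span H (show (5:Fin 16) < 6 by decide) _ (Jspan5 H _ w6)]
  norm_num

lemma qvec_inner_eq (H : Matrix (Fin 2) (Fin 4) ℂ) (j : Fin 16) (x : EuclideanSpace ℝ (Fin 16)) :
    ⟪qvec H j, x⟫_ℝ = (‖gramSchmidt ℝ (hcol H) j‖)⁻¹ * ⟪gramSchmidt ℝ (hcol H) j, x⟫_ℝ := by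
  have hq : qvec H j = (‖gramSchmidt ℝ (hcol H) j‖ : ℝ)⁻¹ • gramSchmidt ℝ (hcol H) j := rfl
  rw [hq, real_inner_smul_left]

end MIMO3D


open MIMO3D

/-- The second diagonal block R₂₂ of R has the same zero pattern as
R₁₁: ⟨q₅,h₆⟩ = ⟨q₅,h₈⟩ = ⟨q₆,h₇⟩ = ⟨q₇,h₈⟩ = 0 (paper's 1-based indices; 0-indexed
here as q₄,…,q₇ and h₄,…,h₇). -/
theorem stmt3 (H : Matrix (Fin 2) (Fin 4) ℂ) (hLI : LinearIndependent ℝ (hcol H)) :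
    ⟪qvec H 4, hcol H 5⟫_ℝ = 0 ∧ ⟪qvec H 4, hcol H 7⟫_ℝ = 0 ∧
    ⟪qvec H 5, hcol H 6⟫_ℝ = 0 ∧ ⟪qvec H 6, hcol H 7⟫_ℝ = 0 := by
  refine ⟨?_, ?_, ?_, ?_⟩
  · rw [qvec_inner_eq, claimA H, mul_zero]
  · rw [qvec_inner_eq, claimB H, mul_zero]
  · rw [qvec_inner_eq, claimC H, mul_zero]
  · rw [qvec_inner_eq, claimD H, mul_zero]
end
end

section
/- In the QR decomposition H_eq = QR of the equivalent channel matrix of the 3D MIMO code, the following pairing identities hold: ⟨q_j,h_k⟩ = ⟨q_{j+1},h_{k+1}⟩ for all j ∈ {5,7} and k ∈ {9,11}. -/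
noncomputable section

open scoped InnerProductSpace

open MIMO3D


def sigma16 (i : Fin 16) : Fin 16 :=
  ⟨if i.val % 2 = 0 then i.val + 1 else i.val - 1, by split <;> omega⟩

def eps16 (i : Fin 16) : ℝ :=
  if i.val < 8 then (if i.val % 2 = 0 then -1 else 1) else (if i.val % 2 = 0 then 1 else -1)

lemma eps16_eq_one_or (i : Fin 16) : eps16 i = 1 ∨ eps16 i = -1 := by
  simp only [eps16]; split_ifs <;> simp

lemma sigma16_sigma16 (i : Fin 16) : sigma16 (sigma16 i) = i := by
  simp only [sigma16]
  split_ifs <;> (apply Fin.ext; simp_all <;> omega)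

lemma eps16_sigma16 (i : Fin 16) : eps16 (sigma16 i) = -eps16 i := by
  simp only [sigma16, eps16]
  split_ifs <;> simp_all <;> omega

def sigmaEquiv : Equiv (Fin 16) (Fin 16) := ⟨sigma16, sigma16, sigma16_sigma16, sigma16_sigma16⟩

def Jmap : EuclideanSpace ℝ (Fin 16) →ₗ[ℝ] EuclideanSpace ℝ (Fin 16) where
  toFun v := WithLp.toLp 2 (fun m => eps16 m * v (sigma16 m))
  map_add' x y := by ext m; simp [mul_add]
  map_smul' c x := by ext m; simp; ring

lemma Jmap_apply (v : EuclideanSpace ℝ (Fin 16)) (m : Fin 16) :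
    Jmap v m = eps16 m * v (sigma16 m) := rfl

lemma Jmap_Jmap (v : EuclideanSpace ℝ (Fin 16)) : Jmap (Jmap v) = -v := by
  ext m
  show eps16 m * (eps16 (sigma16 m) * v (sigma16 (sigma16 m))) = (-v) m
  rw [sigma16_sigma16, eps16_sigma16]
  show _ = -(v m)
  rcases eps16_eq_one_or m with h | h <;> rw [h] <;> ring

lemma inner_Jmap_Jmap (x y : EuclideanSpace ℝ (Fin 16)) : ⟪Jmap x, Jmap y⟫_ℝ = ⟪x, y⟫_ℝ := by
  simp only [PiLp.inner_apply, RCLike.inner_apply, starRingEnd_apply, star_trivial]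
  rw [← Equiv.sum_comp sigmaEquiv (fun m => y m * x m)]
  apply Finset.sum_congr rfl
  intro m _
  show eps16 m * y (sigma16 m) * (eps16 m * x (sigma16 m)) = y (sigma16 m) * x (sigma16 m)
  rcases eps16_eq_one_or m with h | h <;> rw [h] <;> ring

lemma inner_Jmap_left (x y : EuclideanSpace ℝ (Fin 16)) : ⟪Jmap x, y⟫_ℝ = -⟪x, Jmap y⟫_ℝ := by
  have h := inner_Jmap_Jmap x (Jmap y)
  rw [Jmap_Jmap] at h
  rw [← h]; simp [inner_neg_right]

lemma inner_Jmap_self (x : EuclideanSpace ℝ (Fin 16)) : ⟪x, Jmap x⟫_ℝ = 0 := by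
  have h := inner_Jmap_left x x
  have h2 : ⟪Jmap x, x⟫_ℝ = ⟪x, Jmap x⟫_ℝ := real_inner_comm _ _
  linarith [h, h2]

lemma norm_Jmap (x : EuclideanSpace ℝ (Fin 16)) : ‖Jmap x‖ = ‖x‖ := by
  have := inner_Jmap_Jmap x x
  rw [real_inner_self_eq_norm_sq, real_inner_self_eq_norm_sq] at this
  nlinarith [norm_nonneg (Jmap x), norm_nonneg x]

def Dmat : Matrix (Fin 4) (Fin 4) ℂ := Matrix.diagonal ![Complex.I, Complex.I, -Complex.I, -Complex.I]

lemma codeword_smulI (s : Fin 8 → ℂ) :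
    codeword (fun t => Complex.I * s t) = codeword s * Dmat := by
  ext i j
  fin_cases i <;> fin_cases j <;>
    simp [codeword, Dmat, Matrix.mul_apply, Matrix.diagonal, Matrix.smul_apply,
      Fin.sum_univ_succ, map_mul, Complex.conj_I] <;> ring

lemma tildeVec_mulD (Y : Matrix (Fin 2) (Fin 4) ℂ) :
    tildeVec (Y * Dmat) = Jmap (tildeVec Y) := by
  ext m
  have hv : ∀ (k : ℕ) (h : k < 16), ((⟨k, h⟩ : Fin 16) : ℕ) = k := fun k h => rfl
  fin_cases m <;>
    norm_num [tildeVec, Dmat, Jmap_apply, eps16, sigma16, Matrix.mul_diagonal,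
      Complex.mul_re, Complex.mul_im, Complex.I_re, Complex.I_im, hv]

lemma sOfReal_single_succ (m : Fin 16) (hm : m.val % 2 = 0) :
    sOfReal (Pi.single (m + 1) (1:ℝ)) = fun t => Complex.I * sOfReal (Pi.single m (1:ℝ)) t := by
  have hlt := m.isLt
  have h1 : ((m + 1 : Fin 16) : ℕ) = m.val + 1 := by
    rw [Fin.val_add]; simp; omega
  funext t
  have ht := t.isLt
  simp only [sOfReal, Pi.single_apply]
  split_ifs <;> simp_all [Fin.ext_iff] <;> omega

lemma hcol_succ (H : Matrix (Fin 2) (Fin 4) ℂ) (m : Fin 16) (hm : m.val % 2 = 0) :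
    hcol H (m + 1) = Jmap (hcol H m) := by
  unfold hcol
  rw [sOfReal_single_succ m hm, codeword_smulI, ← Matrix.mul_assoc, tildeVec_mulD]

instance : WellFoundedLT (Fin 16) := inferInstance

lemma rvec_succ_aux (H : Matrix (Fin 2) (Fin 4) ℂ) :
    ∀ n : ℕ, ∀ m : Fin 16, m.val = n → m.val % 2 = 0 →
      InnerProductSpace.gramSchmidt ℝ (hcol H) (m + 1) = Jmap (InnerProductSpace.gramSchmidt ℝ (hcol H) m) := by
  intro n
  induction n using Nat.strong_induction_on with
  | _ n IH =>
  intro m hmn hm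
  have hlt := m.isLt
  have hadd : ∀ i : Fin 16, i.val < 15 → ((i + 1 : Fin 16) : ℕ) = i.val + 1 := by
    intro i h; rw [Fin.val_add]; simp; omega
  have hJr : ∀ i : Fin 16, i < m →
      Jmap (InnerProductSpace.gramSchmidt ℝ (hcol H) i)
        = (if i.val % 2 = 0 then (1:ℝ) else -1) • InnerProductSpace.gramSchmidt ℝ (hcol H) (sigma16 i) := by
    intro i hi
    have hilt : i.val < m.val := hi
    by_cases hie : i.val % 2 = 0
    · have hs : sigma16 i = i + 1 := by
        apply Fin.ext
        rw [hadd i (by omega)]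
        simp [sigma16, hie]
      rw [hs, ← IH i.val (by omega) i rfl hie, if_pos hie, one_smul]
    · set p : Fin 16 := ⟨i.val - 1, by omega⟩ with hp
      have hpe : p.val % 2 = 0 := by simp [hp]; omega
      have hip : i = p + 1 := by
        apply Fin.ext
        rw [hadd p (by simp [hp]; omega)]
        simp [hp]; omega
      have hrp : InnerProductSpace.gramSchmidt ℝ (hcol H) i = Jmap (InnerProductSpace.gramSchmidt ℝ (hcol H) p) := by
        rw [hip]; exact IH p.val (by simp [hp]; omega) p rfl hpe
      have hs : sigma16 i = p := by apply Fin.ext; simp [sigma16, hie, hp]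
      rw [hrp, Jmap_Jmap, hs, if_neg hie, neg_one_smul]
  have hnorm : ∀ i : Fin 16, i < m →
      ‖InnerProductSpace.gramSchmidt ℝ (hcol H) (sigma16 i)‖ = ‖InnerProductSpace.gramSchmidt ℝ (hcol H) i‖ := by
    intro i hi
    have h1 := congrArg norm (hJr i hi)
    rw [norm_Jmap, norm_smul] at h1
    have h2 : ‖(if i.val % 2 = 0 then (1:ℝ) else -1)‖ = 1 := by split_ifs <;> norm_num
    rw [h2, one_mul] at h1
    exact h1.symm
  have hsig_mem : ∀ i : Fin 16, i < m ↔ sigma16 i < m := by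
    intro i
    have hi16 := i.isLt
    simp only [Fin.lt_def]
    have hsv : (sigma16 i).val = if i.val % 2 = 0 then i.val + 1 else i.val - 1 := rfl
    rw [hsv]
    by_cases h : i.val % 2 = 0 <;> simp [h] <;> omega
  have hd1 := InnerProductSpace.gramSchmidt_def'' ℝ (hcol H) m
  have hd2 := InnerProductSpace.gramSchmidt_def'' ℝ (hcol H) (m + 1)
  simp only [RCLike.ofReal_real_eq_id, id_eq] at hd1 hd2
  have hrm : InnerProductSpace.gramSchmidt ℝ (hcol H) m = hcol H m - ∑ i ∈ Finset.Iio m,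
      (⟪InnerProductSpace.gramSchmidt ℝ (hcol H) i, hcol H m⟫_ℝ / ‖InnerProductSpace.gramSchmidt ℝ (hcol H) i‖^2) •
        InnerProductSpace.gramSchmidt ℝ (hcol H) i :=
    eq_sub_of_add_eq hd1.symm
  have hm1v : ((m + 1 : Fin 16) : ℕ) = m.val + 1 := hadd m (by omega)
  have hIio : Finset.Iio (m + 1) = insert m (Finset.Iio m) := by
    ext x
    simp only [Finset.mem_Iio, Finset.mem_insert, Fin.lt_def, hm1v]
    constructor
    · intro h
      by_cases hx : x.val = m.val
      · exact Or.inl (Fin.ext hx)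
      · exact Or.inr (by omega)
    · rintro (rfl | h) <;> omega
  have hfm1 : hcol H (m + 1) = Jmap (hcol H m) := hcol_succ H m hm
  have hperp : ⟪InnerProductSpace.gramSchmidt ℝ (hcol H) m, hcol H (m + 1)⟫_ℝ = 0 := by
    rw [hfm1]
    conv_lhs => rw [hd1]
    rw [map_add, inner_add_right, inner_Jmap_self, map_sum, inner_sum, zero_add]
    apply Finset.sum_eq_zero
    intro i hi
    have him : i < m := Finset.mem_Iio.mp hi
    rw [map_smul, inner_smul_right, hJr i him, inner_smul_right]
    have hne : m ≠ sigma16 i := by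
      intro hcon
      have hc2 : (sigma16 i).val = m.val := by rw [← hcon]
      have hsv : (sigma16 i).val = if i.val % 2 = 0 then i.val + 1 else i.val - 1 := rfl
      have hilt : i.val < m.val := him
      by_cases hpar : i.val % 2 = 0 <;> simp [hpar] at hsv <;> omega
    rw [InnerProductSpace.gramSchmidt_orthogonal ℝ (hcol H) hne]
    ring
  have hcoef : ∀ i : Fin 16, i < m →
      (⟪InnerProductSpace.gramSchmidt ℝ (hcol H) i, hcol H m⟫_ℝ / ‖InnerProductSpace.gramSchmidt ℝ (hcol H) i‖^2) •
          Jmap (InnerProductSpace.gramSchmidt ℝ (hcol H) i)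
        = (⟪InnerProductSpace.gramSchmidt ℝ (hcol H) (sigma16 i), hcol H (m + 1)⟫_ℝ /
            ‖InnerProductSpace.gramSchmidt ℝ (hcol H) (sigma16 i)‖^2) •
          InnerProductSpace.gramSchmidt ℝ (hcol H) (sigma16 i) := by
    intro i hi
    have hsm : sigma16 i < m := (hsig_mem i).mp hi
    by_cases hpar : i.val % 2 = 0
    · have h2 : Jmap (InnerProductSpace.gramSchmidt ℝ (hcol H) i) = InnerProductSpace.gramSchmidt ℝ (hcol H) (sigma16 i) := by
        rw [hJr i hi, if_pos hpar, one_smul]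
      have h1 : ⟪InnerProductSpace.gramSchmidt ℝ (hcol H) (sigma16 i), hcol H (m + 1)⟫_ℝ
          = ⟪InnerProductSpace.gramSchmidt ℝ (hcol H) i, hcol H m⟫_ℝ := by
        rw [hfm1, ← h2, inner_Jmap_Jmap]
      rw [h1, hnorm i hi, h2]
    · have h2 : Jmap (InnerProductSpace.gramSchmidt ℝ (hcol H) i) = -(InnerProductSpace.gramSchmidt ℝ (hcol H) (sigma16 i)) := by
        rw [hJr i hi, if_neg hpar, neg_one_smul]
      have hps : (sigma16 i).val % 2 = 0 := by
        have hsv : (sigma16 i).val = if i.val % 2 = 0 then i.val + 1 else i.val - 1 := rfl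
        rw [hsv, if_neg hpar]; omega
      have h3 : Jmap (InnerProductSpace.gramSchmidt ℝ (hcol H) (sigma16 i)) = InnerProductSpace.gramSchmidt ℝ (hcol H) i := by
        rw [hJr (sigma16 i) hsm, if_pos hps, one_smul, sigma16_sigma16]
      have h1 : ⟪InnerProductSpace.gramSchmidt ℝ (hcol H) (sigma16 i), hcol H (m + 1)⟫_ℝ
          = -⟪InnerProductSpace.gramSchmidt ℝ (hcol H) i, hcol H m⟫_ℝ := by
        rw [hfm1]
        have h4 := inner_Jmap_left (InnerProductSpace.gramSchmidt ℝ (hcol H) (sigma16 i)) (hcol H m)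
        rw [h3] at h4
        linarith
      rw [h2, h1, hnorm i hi, smul_neg, ← neg_smul]
      congr 1
      ring
  have hsum : ∑ i ∈ Finset.Iio m,
        (⟪InnerProductSpace.gramSchmidt ℝ (hcol H) i, hcol H m⟫_ℝ / ‖InnerProductSpace.gramSchmidt ℝ (hcol H) i‖^2) •
          Jmap (InnerProductSpace.gramSchmidt ℝ (hcol H) i)
      = ∑ i ∈ Finset.Iio m,
        (⟪InnerProductSpace.gramSchmidt ℝ (hcol H) i, hcol H (m + 1)⟫_ℝ / ‖InnerProductSpace.gramSchmidt ℝ (hcol H) i‖^2) •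
          InnerProductSpace.gramSchmidt ℝ (hcol H) i := by
    apply Finset.sum_equiv sigmaEquiv
    · intro i
      simp only [Finset.mem_Iio]
      exact hsig_mem i
    · intro i hi
      exact hcoef i (Finset.mem_Iio.mp hi)
  have hr1 : InnerProductSpace.gramSchmidt ℝ (hcol H) (m + 1) = hcol H (m + 1) - ∑ i ∈ Finset.Iio (m + 1),
      (⟪InnerProductSpace.gramSchmidt ℝ (hcol H) i, hcol H (m + 1)⟫_ℝ / ‖InnerProductSpace.gramSchmidt ℝ (hcol H) i‖^2) •
        InnerProductSpace.gramSchmidt ℝ (hcol H) i :=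
    eq_sub_of_add_eq hd2.symm
  rw [hr1, hIio, Finset.sum_insert (by simp), hperp, zero_div, zero_smul, zero_add,
    hrm, map_sub, hfm1, map_sum]
  congr 1
  conv_lhs => rw [← hfm1]
  rw [← hsum]
  apply Finset.sum_congr rfl
  intro i _
  rw [map_smul]

lemma qvec_succ (H : Matrix (Fin 2) (Fin 4) ℂ) (m : Fin 16) (hm : m.val % 2 = 0) :
    qvec H (m + 1) = Jmap (qvec H m) := by
  show InnerProductSpace.gramSchmidtNormed ℝ (hcol H) (m + 1) = Jmap (InnerProductSpace.gramSchmidtNormed ℝ (hcol H) m)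
  unfold InnerProductSpace.gramSchmidtNormed
  rw [rvec_succ_aux H m.val m rfl hm, norm_Jmap, map_smul]


/-- The pairing identities ⟨q_j,h_k⟩ = ⟨q_{j+1},h_{k+1}⟩ hold for
all j ∈ {5,7} and k ∈ {9,11} (paper's 1-based indices; 0-indexed here:
j ∈ {4,6}, k ∈ {8,10}). -/
theorem stmt9 (H : Matrix (Fin 2) (Fin 4) ℂ) (hLI : LinearIndependent ℝ (hcol H))
    (j k : Fin 16) (hj : j = 4 ∨ j = 6) (hk : k = 8 ∨ k = 10) :
    ⟪qvec H j, hcol H k⟫_ℝ = ⟪qvec H (j + 1), hcol H (k + 1)⟫_ℝ := by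
  have hj' : j.val % 2 = 0 := by rcases hj with rfl | rfl <;> decide
  have hk' : k.val % 2 = 0 := by rcases hk with rfl | rfl <;> decide
  rw [qvec_succ H j hj', hcol_succ H k hk', inner_Jmap_Jmap]
end
end
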